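/- Let p ≥ 1, let Σ : ℝ^p → PD_p(ℝ) assign to each point a real positive definite p×p matrix, and let ξ be a finite positive measure on (0,∞). Then the kernel R^{NS}(x,y) = φ_xy ∫_0^∞ exp(−Q_xy(x−y)/t²) ξ(dt) is positive semidefinite on ℝ^p × ℝ^p: for every n ∈ ℕ, all points x_1, …, x_n ∈ ℝ^p and all real coefficients c_1, …, c_n, ∑_{i,j} c_i c_j R^{NS}(x_i, x_j) ≥ 0. -/

import Mathlib

open MeasureTheory Matrix Real

/-- `Q_xy(h) = hᵀ ((Σx+Σy)/2)⁻¹ h`. -/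
noncomputable def Qform {p : ℕ} (A B : Matrix (Fin p) (Fin p) ℝ) (h : Fin p → ℝ) : ℝ :=
  h ⬝ᵥ ((((2:ℝ)⁻¹ • (A + B))⁻¹).mulVec h)

/-- `φ_xy = det(Σx)^{1/4} det(Σy)^{1/4} det((Σx+Σy)/2)^{-1/2}`. -/
noncomputable def phiFactor {p : ℕ} (A B : Matrix (Fin p) (Fin p) ℝ) : ℝ :=
  A.det ^ ((1:ℝ) / 4) * B.det ^ ((1:ℝ) / 4) * ((2:ℝ)⁻¹ • (A + B)).det ^ (-(1:ℝ) / 2)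

/-! ### Auxiliary material -/

namespace NSAux

open scoped MatrixOrder

variable {p : ℕ}

/-- The quadratic form of a matrix. -/
noncomputable def qf (M : Matrix (Fin p) (Fin p) ℝ) (u : Fin p → ℝ) : ℝ := u ⬝ᵥ M.mulVec u

lemma qf_nonneg {M : Matrix (Fin p) (Fin p) ℝ} (hM : M.PosDef) (u : Fin p → ℝ) :
    0 ≤ qf M u := by
  have := hM.posSemidef.dotProduct_mulVec_nonneg u
  simpa [qf] using this

lemma posDef_smul {M : Matrix (Fin p) (Fin p) ℝ} (hM : M.PosDef) {c : ℝ} (hc : 0 < c) :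
    (c • M).PosDef := by
  have hs : Mᵀ = M := by simpa using hM.1.eq
  refine ⟨?_, fun x hx => ?_⟩
  · unfold Matrix.IsHermitian
    rw [conjTranspose_smul]
    simp [hs]
  · exact (hM.smul hc).2 hx

lemma det_inv_pd {M : Matrix (Fin p) (Fin p) ℝ} (hM : M.PosDef) : M⁻¹.det = M.det⁻¹ := by
  rw [Matrix.det_nonsing_inv]; simp [Ring.inverse_eq_inv']

lemma inv_add_inv_eq {A B : Matrix (Fin p) (Fin p) ℝ} (hA : A.PosDef) (hB : B.PosDef) :
    A⁻¹ + B⁻¹ = B⁻¹ * (A + B) * A⁻¹ := by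
  have hdA : IsUnit A.det := isUnit_iff_ne_zero.mpr hA.det_pos.ne'
  have hdB : IsUnit B.det := isUnit_iff_ne_zero.mpr hB.det_pos.ne'
  rw [mul_add, add_mul, mul_assoc, Matrix.mul_nonsing_inv _ hdA, mul_one,
    Matrix.nonsing_inv_mul _ hdB, one_mul, add_comm]

lemma AB_inv {A B : Matrix (Fin p) (Fin p) ℝ} (hA : A.PosDef) (hB : B.PosDef) :
    A * (A + B)⁻¹ * B = (A⁻¹ + B⁻¹)⁻¹ := by
  have hdA : IsUnit A.det := isUnit_iff_ne_zero.mpr hA.det_pos.ne'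
  have hdB : IsUnit B.det := isUnit_iff_ne_zero.mpr hB.det_pos.ne'
  rw [inv_add_inv_eq hA hB, Matrix.mul_inv_rev, Matrix.mul_inv_rev,
    Matrix.nonsing_inv_nonsing_inv _ hdA, Matrix.nonsing_inv_nonsing_inv _ hdB]
  noncomm_ring

lemma smulInvPD {M : Matrix (Fin p) (Fin p) ℝ} (hM : M.PosDef) {c : ℝ} (hc : c ≠ 0) :
    (c • M)⁻¹ = c⁻¹ • M⁻¹ := by
  apply Matrix.inv_eq_left_inv
  rw [Matrix.smul_mul, Matrix.mul_smul, smul_smul, inv_mul_cancel₀ hc,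
    Matrix.nonsing_inv_mul _ (isUnit_iff_ne_zero.mpr hM.det_pos.ne'), one_smul]

/-! #### the Gaussian integral on `Fin p → ℝ` -/

lemma norm_equiv_symm (v : Fin p → ℝ) :
    ‖(MeasurableEquiv.toLp 2 (Fin p → ℝ)) v‖ ^ 2 = v ⬝ᵥ v := by
  rw [EuclideanSpace.norm_eq, Real.sq_sqrt (by positivity)]
  simp [dotProduct, sq]

lemma base_integral : ∫ v : Fin p → ℝ, Real.exp (-(v ⬝ᵥ v)) = (π : ℝ) ^ ((p : ℝ) / 2) := by
  have h := GaussianFourier.integral_rexp_neg_mul_sq_norm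
    (V := EuclideanSpace ℝ (Fin p)) (b := 1) one_pos
  have hmp := (EuclideanSpace.volume_preserving_symm_measurableEquiv_toLp (Fin p)).symm
  rw [← hmp.integral_comp (MeasurableEquiv.measurableEmbedding _)] at h
  simp only [finrank_euclideanSpace, Fintype.card_fin, div_one] at h
  rw [← h]
  apply integral_congr_ae
  filter_upwards with v
  simp only [Function.comp_apply, neg_mul, one_mul, MeasurableEquiv.symm_symm, norm_equiv_symm]

lemma base_integrable : Integrable (fun v : Fin p → ℝ => Real.exp (-(v ⬝ᵥ v))) := by
  have h := GaussianFourier.integrable_cexp_neg_mul_sq_norm_add (V := EuclideanSpace ℝ (Fin p))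
    (b := (1:ℂ)) (by norm_num) 0 0
  have h2 := h.norm
  have hmp := (EuclideanSpace.volume_preserving_symm_measurableEquiv_toLp (Fin p)).symm
  rw [← hmp.integrable_comp_emb (MeasurableEquiv.measurableEmbedding _)] at h2
  apply h2.congr
  filter_upwards with v
  simp only [Function.comp_apply, Complex.norm_exp, MeasurableEquiv.symm_symm]
  rw [← norm_equiv_symm v]
  simp [← Complex.ofReal_pow]

lemma qf_eq_sqrt {M : Matrix (Fin p) (Fin p) ℝ} (hM : M.PosDef) (u : Fin p → ℝ) :
    qf M u = (CFC.sqrt M *ᵥ u) ⬝ᵥ (CFC.sqrt M *ᵥ u) := by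
  set N := CFC.sqrt M with hN
  have hNN : N * N = M := CFC.sqrt_mul_sqrt_self M hM.posSemidef.nonneg
  have hsym : Nᵀ = N := by simpa using (CFC.sqrt_nonneg M).posSemidef.1.eq
  rw [qf, ← hNN, ← mulVec_mulVec, dotProduct_mulVec, ← mulVec_transpose, hsym]

lemma det_sqrt_sq {M : Matrix (Fin p) (Fin p) ℝ} (hM : M.PosDef) :
    (CFC.sqrt M).det ^ 2 = M.det := by
  rw [sq, ← det_mul, CFC.sqrt_mul_sqrt_self M hM.posSemidef.nonneg]

lemma det_sqrt_ne {M : Matrix (Fin p) (Fin p) ℝ} (hM : M.PosDef) :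
    (CFC.sqrt M).det ≠ 0 := by
  intro h
  have := det_sqrt_sq hM
  rw [h] at this
  exact hM.det_pos.ne' (by simpa using this.symm)

lemma abs_det_sqrt {M : Matrix (Fin p) (Fin p) ℝ} (hM : M.PosDef) :
    |(CFC.sqrt M).det| = Real.sqrt M.det := by
  rw [← Real.sqrt_sq_eq_abs, det_sqrt_sq hM]

lemma integral_comp_mulVec (N : Matrix (Fin p) (Fin p) ℝ) (hd : N.det ≠ 0)
    (f : (Fin p → ℝ) → ℝ) :
    ∫ u, f (N *ᵥ u) = |N.det|⁻¹ * ∫ v, f v := by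
  haveI : Invertible N := N.invertibleOfIsUnitDet (isUnit_iff_ne_zero.mpr hd)
  let eL : (Fin p → ℝ) ≃ₗ[ℝ] (Fin p → ℝ) := N.toLinearEquiv' this
  let e : (Fin p → ℝ) ≃ᵐ (Fin p → ℝ) := eL.toContinuousLinearEquiv.toHomeomorph.toMeasurableEquiv
  have he : ∀ u, e u = N *ᵥ u := fun u => by
    simp [e, eL, Matrix.toLinearEquiv']
  have hmap : Measure.map e volume = ENNReal.ofReal (|N.det|⁻¹) • volume := by
    have : (e : (Fin p → ℝ) → (Fin p → ℝ)) = Matrix.toLin' N := by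
      ext u; rw [he u, Matrix.toLin'_apply]
    rw [this, Real.map_matrix_volume_pi_eq_smul_volume_pi hd, abs_inv]
  calc ∫ u, f (N *ᵥ u) = ∫ u, f (e u) := by simp_rw [he]
    _ = ∫ v, f v ∂(Measure.map e volume) := (MeasureTheory.integral_map_equiv e f).symm
    _ = |N.det|⁻¹ * ∫ v, f v := by
        rw [hmap, integral_smul_measure, ENNReal.toReal_ofReal (by positivity), smul_eq_mul]

lemma integrable_comp_mulVec (N : Matrix (Fin p) (Fin p) ℝ) (hd : N.det ≠ 0)
    {f : (Fin p → ℝ) → ℝ} (hf : Integrable f) :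
    Integrable (fun u => f (N *ᵥ u)) := by
  haveI : Invertible N := N.invertibleOfIsUnitDet (isUnit_iff_ne_zero.mpr hd)
  let eL : (Fin p → ℝ) ≃ₗ[ℝ] (Fin p → ℝ) := N.toLinearEquiv' this
  let e : (Fin p → ℝ) ≃ᵐ (Fin p → ℝ) := eL.toContinuousLinearEquiv.toHomeomorph.toMeasurableEquiv
  have he : ∀ u, e u = N *ᵥ u := fun u => by
    simp [e, eL, Matrix.toLinearEquiv']
  have hmap : Measure.map e volume = ENNReal.ofReal (|N.det|⁻¹) • volume := by
    have : (e : (Fin p → ℝ) → (Fin p → ℝ)) = Matrix.toLin' N := by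
      ext u; rw [he u, Matrix.toLin'_apply]
    rw [this, Real.map_matrix_volume_pi_eq_smul_volume_pi hd, abs_inv]
  have h1 : Integrable f (Measure.map e volume) := by
    rw [hmap]
    exact hf.smul_measure ENNReal.ofReal_ne_top
  have h2 := (MeasureTheory.integrable_map_equiv e f).mp h1
  apply h2.congr
  filter_upwards with u
  simp [Function.comp, he u]

lemma gauss_integrable {M : Matrix (Fin p) (Fin p) ℝ} (hM : M.PosDef) :
    Integrable (fun u : Fin p → ℝ => Real.exp (-qf M u)) := by
  have : (fun u : Fin p → ℝ => Real.exp (-qf M u))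
      = fun u => (fun v : Fin p → ℝ => Real.exp (-(v ⬝ᵥ v))) (CFC.sqrt M *ᵥ u) := by
    funext u; rw [qf_eq_sqrt hM]
  rw [this]
  exact integrable_comp_mulVec _ (det_sqrt_ne hM) base_integrable

lemma gauss_integral {M : Matrix (Fin p) (Fin p) ℝ} (hM : M.PosDef) :
    ∫ u : Fin p → ℝ, Real.exp (-qf M u) = Real.sqrt (π ^ p / M.det) := by
  have h1 : ∫ u : Fin p → ℝ, Real.exp (-qf M u)
      = ∫ u, (fun v : Fin p → ℝ => Real.exp (-(v ⬝ᵥ v))) (CFC.sqrt M *ᵥ u) := by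
    apply integral_congr_ae; filter_upwards with u; rw [qf_eq_sqrt hM]
  rw [h1, integral_comp_mulVec (CFC.sqrt M) (det_sqrt_ne hM)
    (fun v : Fin p → ℝ => Real.exp (-(v ⬝ᵥ v))), base_integral, abs_det_sqrt hM]
  rw [Real.sqrt_div (by positivity : (0:ℝ) ≤ π ^ p)]
  rw [div_eq_mul_inv, mul_comm]
  congr 1
  rw [Real.sqrt_eq_rpow, ← Real.rpow_natCast π p, ← Real.rpow_mul pi_pos.le]
  norm_num

/-! #### completing the square -/

lemma sd {M : Matrix (Fin p) (Fin p) ℝ} (hsym : Mᵀ = M) (v w : Fin p → ℝ) :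
    v ⬝ᵥ M *ᵥ w = (M *ᵥ v) ⬝ᵥ w := by
  rw [dotProduct_mulVec, ← mulVec_transpose, hsym]

lemma dot_symm {M : Matrix (Fin p) (Fin p) ℝ} (hsym : Mᵀ = M) (v w : Fin p → ℝ) :
    v ⬝ᵥ M *ᵥ w = w ⬝ᵥ M *ᵥ v := by
  rw [sd hsym, dotProduct_comm]

lemma qf_sub_expand' (M : Matrix (Fin p) (Fin p) ℝ) (v w : Fin p → ℝ) :
    qf M (v - w) = v ⬝ᵥ M *ᵥ v - v ⬝ᵥ M *ᵥ w - w ⬝ᵥ M *ᵥ v + w ⬝ᵥ M *ᵥ w := by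
  simp only [qf, mulVec_sub, dotProduct_sub, sub_dotProduct]
  ring

lemma qf_sub_expand {M : Matrix (Fin p) (Fin p) ℝ} (hsym : Mᵀ = M) (v w : Fin p → ℝ) :
    qf M (v - w) = qf M v - 2 * (w ⬝ᵥ M *ᵥ v) + qf M w := by
  rw [qf_sub_expand', dot_symm hsym v w, qf, qf]
  ring

lemma key {A B : Matrix (Fin p) (Fin p) ℝ} (hA : A.PosDef) (hB : B.PosDef)
    (a b u : Fin p → ℝ) :
    qf A (u - a) + qf B (u - b)
      = qf (A + B) (u - ((A + B)⁻¹ *ᵥ (A *ᵥ a + B *ᵥ b)))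
        + qf (A * (A + B)⁻¹ * B) (a - b) := by
  have hAs : Aᵀ = A := by simpa using hA.1.eq
  have hBs : Bᵀ = B := by simpa using hB.1.eq
  have hS : (A + B).PosDef := hA.add hB
  set S := A + B with hSdef
  have hSs : Sᵀ = S := by simpa using hS.1.eq
  have hdet : IsUnit S.det := isUnit_iff_ne_zero.mpr hS.det_pos.ne'
  have hSi : S * S⁻¹ = 1 := mul_nonsing_inv _ hdet
  have hSi' : S⁻¹ * S = 1 := nonsing_inv_mul _ hdet
  set T := A * S⁻¹ * B with hTdef
  have hT1 : A * S⁻¹ * A = A - T := by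
    have h : A * S⁻¹ * A + A * S⁻¹ * B = A := by
      rw [← mul_add, hSdef] at *
      calc A * (A + B)⁻¹ * (A + B) = A * ((A + B)⁻¹ * (A + B)) := by rw [mul_assoc]
        _ = A := by rw [hSi', mul_one]
    linear_combination (norm := (rw [hTdef]; noncomm_ring)) h
  have hT2 : B * S⁻¹ * A = T := by
    have h : A * S⁻¹ * A + B * S⁻¹ * A = A := by
      calc A * S⁻¹ * A + B * S⁻¹ * A = (A + B) * S⁻¹ * A := by noncomm_ring
        _ = S * S⁻¹ * A := by rw [hSdef]
        _ = A := by rw [hSi, one_mul]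
    have h2 : B * S⁻¹ * A = A - A * S⁻¹ * A := by linear_combination (norm := noncomm_ring) h
    rw [h2, hT1]
    noncomm_ring
  have hT3 : B * S⁻¹ * B = B - T := by
    have h : B * S⁻¹ * A + B * S⁻¹ * B = B := by
      calc B * S⁻¹ * A + B * S⁻¹ * B = B * S⁻¹ * (A + B) := by noncomm_ring
        _ = B * (S⁻¹ * S) := by rw [hSdef, mul_assoc]
        _ = B := by rw [hSi', mul_one]
    rw [hT2] at h
    linear_combination (norm := noncomm_ring) h
  set w := A *ᵥ a + B *ᵥ b with hwdef
  set m := S⁻¹ *ᵥ w with hmdef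
  have f1 : S *ᵥ m = w := by
    rw [hmdef, mulVec_mulVec, hSi, one_mulVec]
  have e1 : qf S u = qf A u + qf B u := by
    simp only [qf, hSdef, add_mulVec, dotProduct_add]
  have e2 : m ⬝ᵥ S *ᵥ u = a ⬝ᵥ A *ᵥ u + b ⬝ᵥ B *ᵥ u := by
    rw [dot_symm hSs, f1, hwdef, dotProduct_add, dot_symm hAs u a, dot_symm hBs u b]
  have e3 : qf S m = w ⬝ᵥ S⁻¹ *ᵥ w := by
    rw [qf, f1, dotProduct_comm, hmdef]
  have e4 : w ⬝ᵥ S⁻¹ *ᵥ w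
      = qf A a + qf B b - qf (A * S⁻¹ * B) (a - b) := by
    have t11 : (A *ᵥ a) ⬝ᵥ S⁻¹ *ᵥ (A *ᵥ a) = a ⬝ᵥ (A * S⁻¹ * A) *ᵥ a := by
      rw [← sd hAs, mulVec_mulVec, mulVec_mulVec]
    have t12 : (A *ᵥ a) ⬝ᵥ S⁻¹ *ᵥ (B *ᵥ b) = a ⬝ᵥ T *ᵥ b := by
      rw [← sd hAs, mulVec_mulVec, mulVec_mulVec, hTdef]
    have t21 : (B *ᵥ b) ⬝ᵥ S⁻¹ *ᵥ (A *ᵥ a) = b ⬝ᵥ T *ᵥ a := by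
      rw [← sd hBs, mulVec_mulVec, mulVec_mulVec, hT2]
    have t22 : (B *ᵥ b) ⬝ᵥ S⁻¹ *ᵥ (B *ᵥ b) = b ⬝ᵥ (B * S⁻¹ * B) *ᵥ b := by
      rw [← sd hBs, mulVec_mulVec, mulVec_mulVec]
    have expand : w ⬝ᵥ S⁻¹ *ᵥ w
        = (A *ᵥ a) ⬝ᵥ S⁻¹ *ᵥ (A *ᵥ a) + (A *ᵥ a) ⬝ᵥ S⁻¹ *ᵥ (B *ᵥ b)
          + (B *ᵥ b) ⬝ᵥ S⁻¹ *ᵥ (A *ᵥ a) + (B *ᵥ b) ⬝ᵥ S⁻¹ *ᵥ (B *ᵥ b) := by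
      simp only [hwdef, mulVec_add, dotProduct_add, add_dotProduct]
      ring
    rw [expand, t11, t12, t21, t22, hT1, hT3, qf_sub_expand' (A * S⁻¹ * B) a b]
    simp only [sub_mulVec, dotProduct_sub, ← hTdef, qf]
    ring
  rw [qf_sub_expand hAs, qf_sub_expand hBs, qf_sub_expand hSs, e1, e2, e3, e4]
  ring

/-! #### the Gaussian product integral -/

lemma prod_integrable {A B : Matrix (Fin p) (Fin p) ℝ} (hA : A.PosDef) (hB : B.PosDef)
    (a b : Fin p → ℝ) :
    Integrable (fun u : Fin p → ℝ =>
      Real.exp (-qf A (u - a)) * Real.exp (-qf B (u - b))) := by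
  have hS : (A + B).PosDef := hA.add hB
  set m := (A + B)⁻¹ *ᵥ (A *ᵥ a + B *ᵥ b) with hm
  have heq : (fun u : Fin p → ℝ => Real.exp (-qf A (u - a)) * Real.exp (-qf B (u - b)))
      = fun u => Real.exp (-qf (A * (A + B)⁻¹ * B) (a - b)) * Real.exp (-qf (A + B) (u - m)) := by
    funext u
    rw [← Real.exp_add, ← Real.exp_add, ← neg_add, ← neg_add, key hA hB a b u, add_comm]
  rw [heq]
  exact ((gauss_integrable hS).comp_sub_right m).const_mul _

lemma prod_integral {A B : Matrix (Fin p) (Fin p) ℝ} (hA : A.PosDef) (hB : B.PosDef)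
    (a b : Fin p → ℝ) :
    ∫ u : Fin p → ℝ, Real.exp (-qf A (u - a)) * Real.exp (-qf B (u - b))
      = Real.sqrt (π ^ p / (A + B).det) * Real.exp (-qf (A * (A + B)⁻¹ * B) (a - b)) := by
  have hS : (A + B).PosDef := hA.add hB
  set m := (A + B)⁻¹ *ᵥ (A *ᵥ a + B *ᵥ b) with hm
  have heq : ∀ u : Fin p → ℝ, Real.exp (-qf A (u - a)) * Real.exp (-qf B (u - b))
      = Real.exp (-qf (A * (A + B)⁻¹ * B) (a - b)) * Real.exp (-qf (A + B) (u - m)) := by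
    intro u
    rw [← Real.exp_add, ← Real.exp_add, ← neg_add, ← neg_add, key hA hB a b u, add_comm]
  simp_rw [heq]
  rw [MeasureTheory.integral_const_mul]
  rw [integral_sub_right_eq_self (fun u => Real.exp (-qf (A + B) u)) m]
  rw [gauss_integral hS, mul_comm]

lemma pair_const {P R : Matrix (Fin p) (Fin p) ℝ} (hP : P.PosDef) (hR : R.PosDef)
    {a0 : ℝ} (ha0 : 0 < a0) :
    (2 * a0 / π) ^ ((p:ℝ)/2) * (P.det ^ (-(1:ℝ)/4) * R.det ^ (-(1:ℝ)/4) *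
      Real.sqrt (π ^ p / (a0 • P⁻¹ + a0 • R⁻¹).det))
    = phiFactor P R := by
  have hdP : (0:ℝ) < P.det := hP.det_pos
  have hdR : (0:ℝ) < R.det := hR.det_pos
  have hM2 : ((2:ℝ)⁻¹ • (P + R)).PosDef := posDef_smul (hP.add hR) (by norm_num)
  have hD : (0:ℝ) < ((2:ℝ)⁻¹ • (P + R)).det := hM2.det_pos
  set D := ((2:ℝ)⁻¹ • (P + R)).det with hDdef
  have hPR : P + R = (2:ℝ) • ((2:ℝ)⁻¹ • (P + R)) := by
    rw [smul_smul]; norm_num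
  have hdet1 : (P⁻¹ + R⁻¹).det = R.det⁻¹ * ((2:ℝ)^p * D) * P.det⁻¹ := by
    rw [inv_add_inv_eq hP hR, det_mul, det_mul, det_inv_pd hP, det_inv_pd hR]
    congr 1
    congr 1
    rw [hPR, det_smul, Fintype.card_fin]
  have hdetSum : (a0 • P⁻¹ + a0 • R⁻¹).det
      = a0^p * (R.det⁻¹ * ((2:ℝ)^p * D) * P.det⁻¹) := by
    rw [← smul_add, det_smul, Fintype.card_fin, hdet1]
  have hdS : (0:ℝ) < (a0 • P⁻¹ + a0 • R⁻¹).det := by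
    rw [hdetSum]; positivity
  -- rewrite everything as exponentials
  rw [phiFactor]
  rw [Real.rpow_def_of_pos (by positivity : (0:ℝ) < 2 * a0 / π),
    Real.rpow_def_of_pos hdP, Real.rpow_def_of_pos hdR,
    Real.rpow_def_of_pos hdP, Real.rpow_def_of_pos hdR, Real.rpow_def_of_pos hD,
    Real.sqrt_eq_rpow, Real.rpow_def_of_pos (by positivity)]
  rw [← Real.exp_add, ← Real.exp_add, ← Real.exp_add, ← Real.exp_add, ← Real.exp_add]
  congr 1
  rw [Real.log_div (by positivity) (by positivity), Real.log_mul (by norm_num) ha0.ne',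
    Real.log_div (by positivity) hdS.ne', Real.log_pow, hdetSum,
    Real.log_mul (by positivity) (by positivity),
    Real.log_mul (by positivity) (by positivity),
    Real.log_mul (by positivity) (by positivity),
    Real.log_mul (by positivity) (by positivity),
    Real.log_pow, Real.log_pow, Real.log_inv, Real.log_inv]
  ring

lemma inner_sum_nonneg (n : ℕ) (Sm : Fin n → Matrix (Fin p) (Fin p) ℝ)
    (hSm : ∀ i, (Sm i).PosDef) (x : Fin n → Fin p → ℝ) (c : Fin n → ℝ)
    {t : ℝ} (ht : 0 < t) :
    0 ≤ ∑ i : Fin n, ∑ j : Fin n, c i * c j * (phiFactor (Sm i) (Sm j) *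
        Real.exp (-(Qform (Sm i) (Sm j) (x i - x j)) / t ^ 2)) := by
  set a0 : ℝ := 2 / t ^ 2 with ha0def
  have ha0 : 0 < a0 := by positivity
  set A : Fin n → Matrix (Fin p) (Fin p) ℝ := fun i => a0 • (Sm i)⁻¹ with hAdef
  have hA : ∀ i, (A i).PosDef := fun i => posDef_smul (hSm i).inv ha0
  set d : Fin n → ℝ := fun i => (Sm i).det ^ (-(1:ℝ)/4) with hddef
  set g : Fin n → (Fin p → ℝ) → ℝ :=
    fun i u => d i * Real.exp (-qf (A i) (u - x i)) with hgdef
  set C : ℝ := (2 * a0 / π) ^ ((p:ℝ)/2) with hCdef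
  have hC : 0 < C := by rw [hCdef]; positivity
  -- the matrix `T` in the product formula
  have hT : ∀ i j, A i * (A i + A j)⁻¹ * A j = a0 • (Sm i + Sm j)⁻¹ := by
    intro i j
    rw [AB_inv (hA i) (hA j), hAdef]
    have h1 : ∀ k, (a0 • (Sm k)⁻¹)⁻¹ = a0⁻¹ • Sm k := by
      intro k
      rw [smulInvPD (hSm k).inv ha0.ne',
        Matrix.nonsing_inv_nonsing_inv _ (isUnit_iff_ne_zero.mpr (hSm k).det_pos.ne')]
    rw [h1, h1, ← smul_add, smulInvPD ((hSm i).add (hSm j)) (by positivity), inv_inv]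
  have hQ : ∀ i j, qf (a0 • (Sm i + Sm j)⁻¹) (x i - x j)
      = Qform (Sm i) (Sm j) (x i - x j) / t ^ 2 := by
    intro i j
    have h2 : (((2:ℝ)⁻¹ • (Sm i + Sm j))⁻¹) = (2:ℝ) • (Sm i + Sm j)⁻¹ := by
      rw [smulInvPD ((hSm i).add (hSm j)) (by norm_num : ((2:ℝ)⁻¹) ≠ 0), inv_inv]
    rw [qf, Qform, h2, smul_mulVec, smul_mulVec, dotProduct_smul, dotProduct_smul]
    rw [ha0def]
    simp only [smul_eq_mul]
    field_simp
  -- pair formula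
  have pair : ∀ i j, phiFactor (Sm i) (Sm j) *
      Real.exp (-(Qform (Sm i) (Sm j) (x i - x j)) / t ^ 2)
      = C * ∫ u, g i u * g j u := by
    intro i j
    have hint : ∫ u, g i u * g j u
        = (d i * d j) * (Real.sqrt (π ^ p / (A i + A j).det) *
            Real.exp (-qf (A i * (A i + A j)⁻¹ * A j) (x i - x j))) := by
      have : ∀ u, g i u * g j u = (d i * d j) *
          (Real.exp (-qf (A i) (u - x i)) * Real.exp (-qf (A j) (u - x j))) := by
        intro u; rw [hgdef]; ring
      simp_rw [this]
      rw [MeasureTheory.integral_const_mul, prod_integral (hA i) (hA j)]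
    rw [hint, hT, hQ, ← pair_const (hSm i) (hSm j) ha0, hCdef, hddef]
    have : -(Qform (Sm i) (Sm j) (x i - x j) / t ^ 2)
        = -(Qform (Sm i) (Sm j) (x i - x j)) / t ^ 2 := by ring
    rw [this, hAdef]
    ring
  -- integrability of products
  have hci : ∀ i j, Integrable (fun u => (c i * g i u) * (c j * g j u)) := by
    intro i j
    have h0 := (prod_integrable (hA i) (hA j) (x i) (x j)).const_mul
      ((c i * d i) * (c j * d j))
    apply h0.congr
    filter_upwards with u
    rw [hgdef]
    ring
  -- rewrite the sum as `C` times the integral of a square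
  have hsum : ∑ i : Fin n, ∑ j : Fin n, c i * c j * (phiFactor (Sm i) (Sm j) *
      Real.exp (-(Qform (Sm i) (Sm j) (x i - x j)) / t ^ 2))
      = C * ∫ u, (∑ i, c i * g i u) ^ 2 := by
    have step1 : ∀ i j, c i * c j * (phiFactor (Sm i) (Sm j) *
        Real.exp (-(Qform (Sm i) (Sm j) (x i - x j)) / t ^ 2))
        = C * ∫ u, (c i * g i u) * (c j * g j u) := by
      intro i j
      rw [pair i j]
      have : ∫ u, (c i * g i u) * (c j * g j u)
          = (c i * c j) * ∫ u, g i u * g j u := by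
        rw [← MeasureTheory.integral_const_mul]
        congr 1; funext u; ring
      rw [this]
      ring
    simp_rw [step1]
    simp_rw [← Finset.mul_sum]
    congr 1
    have hsq : ∀ u, (∑ i, c i * g i u) ^ 2
        = ∑ i : Fin n, ∑ j : Fin n, (c i * g i u) * (c j * g j u) := by
      intro u
      rw [sq, Finset.sum_mul_sum]
    simp_rw [hsq]
    rw [MeasureTheory.integral_finset_sum _ (fun i _ => integrable_finset_sum _
      (fun j _ => hci i j))]
    congr 1
    funext i
    rw [MeasureTheory.integral_finset_sum _ (fun j _ => hci i j)]
  rw [hsum]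
  have : 0 ≤ ∫ u, (∑ i, c i * g i u) ^ 2 :=
    integral_nonneg (fun u => sq_nonneg _)
  positivity

end NSAux

open NSAux in
/-- the non-stationary correlation kernel
`R^{NS}(x,y) = φ_xy ∫_0^∞ exp(−Q_xy(x−y)/t²) ξ(dt)` is positive semidefinite. -/
theorem nonstationary_correlation_posSemidef (p : ℕ) (hp : 1 ≤ p)
    (S : (Fin p → ℝ) → Matrix (Fin p) (Fin p) ℝ) (hS : ∀ x, (S x).PosDef)
    (ξ : Measure ℝ) [IsFiniteMeasure ξ] :
    ∀ (n : ℕ) (x : Fin n → (Fin p → ℝ)) (c : Fin n → ℝ),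
      0 ≤ ∑ i : Fin n, ∑ j : Fin n,
        c i * c j * (phiFactor (S (x i)) (S (x j)) *
          ∫ t in Set.Ioi (0:ℝ),
            Real.exp (-(Qform (S (x i)) (S (x j)) (x i - x j)) / t ^ 2) ∂ξ) := by
  intro n x c
  -- nonnegativity of the quadratic forms
  have hQnn : ∀ i j : Fin n, 0 ≤ Qform (S (x i)) (S (x j)) (x i - x j) := by
    intro i j
    have hPD : ((((2:ℝ)⁻¹ • (S (x i) + S (x j)))⁻¹)).PosDef :=
      (posDef_smul ((hS (x i)).add (hS (x j))) (by norm_num : (0:ℝ) < 2⁻¹)).inv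
    have := hPD.posSemidef.dotProduct_mulVec_nonneg (x i - x j)
    simpa [Qform] using this
  -- integrability of each term in `t`
  have hmeas : ∀ i j : Fin n, Measurable (fun t : ℝ =>
      Real.exp (-(Qform (S (x i)) (S (x j)) (x i - x j)) / t ^ 2)) := by
    intro i j
    exact Real.measurable_exp.comp (measurable_const.div ((measurable_id.pow_const 2)))
  have hint : ∀ i j : Fin n, Integrable (fun t : ℝ =>
      c i * c j * (phiFactor (S (x i)) (S (x j)) *
        Real.exp (-(Qform (S (x i)) (S (x j)) (x i - x j)) / t ^ 2)))
      (ξ.restrict (Set.Ioi 0)) := by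
    intro i j
    apply Integrable.mono' (integrable_const
      (|c i * c j * phiFactor (S (x i)) (S (x j))|))
    · exact (((hmeas i j).const_mul _).const_mul _).aestronglyMeasurable
    · filter_upwards [ae_restrict_mem measurableSet_Ioi] with t ht
      have ht' : (0:ℝ) < t := ht
      have ht2 : (0:ℝ) < t ^ 2 := by positivity
      have hexp : Real.exp (-(Qform (S (x i)) (S (x j)) (x i - x j)) / t ^ 2) ≤ 1 := by
        apply Real.exp_le_one_iff.mpr
        apply div_nonpos_of_nonpos_of_nonneg (neg_nonpos_of_nonneg (hQnn i j)) ht2.le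
      have hexp0 : 0 < Real.exp (-(Qform (S (x i)) (S (x j)) (x i - x j)) / t ^ 2) :=
        Real.exp_pos _
      rw [Real.norm_eq_abs, mul_assoc, abs_mul, abs_mul, abs_mul]
      calc |c i| * (|c j| * (|phiFactor (S (x i)) (S (x j))| * |Real.exp _|))
          ≤ |c i| * (|c j| * (|phiFactor (S (x i)) (S (x j))| * 1)) := by
            gcongr
            rw [abs_of_pos hexp0]
            exact hexp
        _ = |c i * c j * phiFactor (S (x i)) (S (x j))| := by
            rw [abs_mul, abs_mul]; ring
  -- rewrite each summand as an integral over `t`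
  have hterm : ∀ i j : Fin n,
      c i * c j * (phiFactor (S (x i)) (S (x j)) *
        ∫ t in Set.Ioi (0:ℝ),
          Real.exp (-(Qform (S (x i)) (S (x j)) (x i - x j)) / t ^ 2) ∂ξ)
      = ∫ t in Set.Ioi (0:ℝ),
          c i * c j * (phiFactor (S (x i)) (S (x j)) *
            Real.exp (-(Qform (S (x i)) (S (x j)) (x i - x j)) / t ^ 2)) ∂ξ := by
    intro i j
    rw [MeasureTheory.integral_const_mul, MeasureTheory.integral_const_mul]
  simp_rw [hterm]
  have hswap1 : ∀ i : Fin n, ∑ j : Fin n, ∫ t in Set.Ioi (0:ℝ),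
      c i * c j * (phiFactor (S (x i)) (S (x j)) *
        Real.exp (-(Qform (S (x i)) (S (x j)) (x i - x j)) / t ^ 2)) ∂ξ
      = ∫ t in Set.Ioi (0:ℝ), ∑ j : Fin n,
          c i * c j * (phiFactor (S (x i)) (S (x j)) *
            Real.exp (-(Qform (S (x i)) (S (x j)) (x i - x j)) / t ^ 2)) ∂ξ := by
    intro i
    exact (MeasureTheory.integral_finset_sum _ (fun j _ => hint i j)).symm
  simp_rw [hswap1]
  rw [← MeasureTheory.integral_finset_sum _
    (fun i _ => integrable_finset_sum _ (fun j _ => hint i j))]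
  apply setIntegral_nonneg measurableSet_Ioi
  intro t ht
  exact inner_sum_nonneg n (fun i => S (x i)) (fun i => hS (x i)) x c ht
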